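/- arXiv:2404.02846 — 2 statements merged into one kernel-verified Lean document; each statement's English description precedes it below -/
import Mathlib

section
/- Let (G, B, N, W) be a Tits system (BN-pair). Then the quadruple (⟨B^d, N ≀ Σ_d⟩, B^d, N ≀ Σ_d, W ≀ Σ_d) is a generalized Tits system in the sense of Iwahori: W ≀ Σ_d ≅ W^d ⋊ Σ_d where W^d is generated by involutions, every element τ of the image of Σ_d normalizes B^d and permutes the set of simple reflections of W^d, B^d τ ≠ B^d for τ ≠ 1, and for every simple reflection s of W^d and w ∈ W ≀ Σ_d one has s B^d w ⊆ B^d s w B^d ∪ B^d w B^d with s B^d ≠ B^d s. -/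
open Pointwise

/-- Place-permutation action of `Σ_d` on `G^d`. -/
def permAction (G : Type*) [Group G] (d : ℕ) :
    Equiv.Perm (Fin d) →* MulAut (Fin d → G) where
  toFun w := MulEquiv.arrowCongr w (MulEquiv.refl G)
  map_one' := by ext g i; rfl
  map_mul' := fun u v => by ext g i; rfl

/-- The wreath product `G ≀ Σ_d = G^d ⋊ Σ_d`, with `Σ_d` acting by place permutations. -/
abbrev WreathProduct (G : Type*) [Group G] (d : ℕ) :=
  SemidirectProduct (Fin d → G) (Equiv.Perm (Fin d)) (permAction G d)

/-- `s^{(j)} = (1,...,1,s,1,...,1)` with `s` in slot `j`. -/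
def unitTuple {G : Type*} [Group G] {d : ℕ} (j : Fin d) (g : G) : Fin d → G :=
  fun i => if i = j then g else 1

section
variable {G : Type*} [Group G] (B N : Subgroup G) (d : ℕ)

/-- The subgroup `B^d` of `G ≀ Σ_d` (tuples in `B^d` with trivial permutation part). -/
def wreathB : Subgroup (WreathProduct G d) :=
  Subgroup.map SemidirectProduct.inl (Subgroup.pi Set.univ fun _ => B)

/-- The subgroup `N ≀ Σ_d` of `G ≀ Σ_d`. -/
def wreathN : Subgroup (WreathProduct G d) :=
  Subgroup.closure
    ((SemidirectProduct.inl '' {f : Fin d → G | ∀ i, f i ∈ N}) ∪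
      Set.range (SemidirectProduct.inr (φ := permAction G d)))

/-- The simple reflections of `W^d`: elements `s^{(j)}` for `s` a simple reflection of `W`. -/
def wreathS (S : Set G) : Set (WreathProduct G d) :=
  {x | ∃ (j : Fin d) (s : G), s ∈ S ∧ x = SemidirectProduct.inl (unitTuple j s)}

end

namespace WH
open SemidirectProduct

variable {G : Type*} [Group G] {d : ℕ}

lemma permAction_apply (σ : Equiv.Perm (Fin d)) (f : Fin d → G) (i : Fin d) :
    (permAction G d σ f) i = f (σ⁻¹ i) := rfl

lemma mem_wreathB {B : Subgroup G} {x : WreathProduct G d} :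
    x ∈ wreathB B d ↔ x.right = 1 ∧ ∀ i, x.left i ∈ B := by
  constructor
  · rintro ⟨f, hf, rfl⟩
    exact ⟨rfl, fun i => hf i (Set.mem_univ i)⟩
  · rintro ⟨h1, h2⟩
    refine ⟨x.left, fun i _ => h2 i, ?_⟩
    conv_rhs => rw [← inl_left_mul_inr_right x]
    rw [h1, map_one, mul_one]

def wreathN' (N : Subgroup G) (d : ℕ) : Subgroup (WreathProduct G d) where
  carrier := {x | ∀ i, x.left i ∈ N}
  one_mem' := fun i => N.one_mem
  mul_mem' := by
    intro a b ha hb i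
    rw [mul_left]
    exact N.mul_mem (ha i) (hb _)
  inv_mem' := by
    intro a ha i
    rw [inv_left]
    exact N.inv_mem (ha _)

lemma mem_wreathN {N : Subgroup G} {x : WreathProduct G d} :
    x ∈ wreathN N d ↔ ∀ i, x.left i ∈ N := by
  constructor
  · intro hx
    refine Subgroup.closure_le (K := wreathN' N d) |>.2 ?_ hx
    rintro y (⟨f, hf, rfl⟩ | ⟨σ, rfl⟩)
    · intro i; exact hf i
    · intro i; exact N.one_mem
  · intro hx
    rw [← inl_left_mul_inr_right x]
    exact Subgroup.mul_mem _
      (Subgroup.subset_closure (Or.inl ⟨x.left, hx, rfl⟩))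
      (Subgroup.subset_closure (Or.inr ⟨x.right, rfl⟩))

lemma unitTuple_one (j : Fin d) : unitTuple j (1 : G) = 1 := by
  funext i; simp [unitTuple]

lemma unitTuple_mul (j : Fin d) (g h : G) :
    unitTuple j (g * h) = unitTuple j g * unitTuple j h := by
  funext i; simp only [unitTuple, Pi.mul_apply]; split <;> simp

def unitHom (j : Fin d) : G →* WreathProduct G d where
  toFun g := inl (unitTuple j g)
  map_one' := by show inl (unitTuple j (1:G)) = 1; rw [unitTuple_one, map_one]
  map_mul' g h := by
    show inl (unitTuple j (g * h)) = inl (unitTuple j g) * inl (unitTuple j h)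
    rw [unitTuple_mul, map_mul]

lemma prod_aux (f : Fin d → G) (i : Fin d) : ∀ l : List (Fin d), l.Nodup →
    ((l.map fun j => unitTuple j (f j)).prod) i = if i ∈ l then f i else 1 := by
  intro l
  induction l with
  | nil => simp
  | cons j t ih =>
    intro h
    rw [List.map_cons, List.prod_cons, Pi.mul_apply, ih (List.nodup_cons.1 h).2]
    by_cases hij : i = j
    · subst hij
      simp [unitTuple, (List.nodup_cons.1 h).1]
    · simp [unitTuple, hij]

lemma prod_unitTuple (f : Fin d → G) :
    ((List.finRange d).map fun j => unitTuple j (f j)).prod = f := by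
  funext i
  rw [prod_aux f i _ (List.nodup_finRange d)]
  simp

lemma inl_eq_prod (f : Fin d → G) :
    (inl f : WreathProduct G d) = ((List.finRange d).map fun j => unitHom j (f j)).prod := by
  conv_lhs => rw [← prod_unitTuple f]
  rw [map_list_prod, List.map_map]
  rfl

end WH

namespace WH
open SemidirectProduct

variable {G : Type*} [Group G] {d : ℕ}

lemma unit_mem_inf {B N : Subgroup G} {j : Fin d} {g : G} (hg : g ∈ B ⊓ N) :
    (inl (unitTuple j g) : WreathProduct G d) ∈ wreathB B d ⊓ wreathN N d := by
  rw [Subgroup.mem_inf, mem_wreathB, mem_wreathN]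
  refine ⟨⟨rfl, fun i => ?_⟩, fun i => ?_⟩ <;>
  · show (if i = j then g else 1) ∈ _
    split
    · first | exact hg.1 | exact hg.2
    · exact Subgroup.one_mem _

lemma conj_left (n h : WreathProduct G d) (hr : h.right = 1) (i : Fin d) :
    (n * h * n⁻¹).left i = n.left i * h.left (n.right⁻¹ i) * (n.left i)⁻¹ := by
  simp [mul_left, inv_left, mul_right, hr, permAction_apply, Pi.mul_apply, Pi.inv_apply,
    Equiv.Perm.inv_def, Equiv.apply_symm_apply]

lemma conj_right (n h : WreathProduct G d) (hr : h.right = 1) :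
    (n * h * n⁻¹).right = 1 := by
  simp [mul_right, hr]


lemma mem_sing_mul {α : Type*} [Monoid α] {a g : α} {s : Set α} :
    g ∈ ({a} : Set α) * s ↔ ∃ p ∈ s, g = a * p := by
  constructor
  · intro h
    rw [Set.mem_mul] at h
    obtain ⟨a', ha', p, hp, hgz⟩ := h
    rw [Set.mem_singleton_iff] at ha'
    exact ⟨p, hp, by rw [← hgz, ha']⟩
  · rintro ⟨p, hp, rfl⟩
    exact Set.mul_mem_mul rfl hp

lemma mem_mul_sing {α : Type*} [Monoid α] {a g : α} {s : Set α} :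
    g ∈ s * ({a} : Set α) ↔ ∃ p ∈ s, g = p * a := by
  constructor
  · intro h
    rw [Set.mem_mul] at h
    obtain ⟨p, hp, a', ha', hgz⟩ := h
    rw [Set.mem_singleton_iff] at ha'
    exact ⟨p, hp, by rw [← hgz, ha']⟩
  · rintro ⟨p, hp, rfl⟩
    exact Set.mul_mem_mul hp rfl

lemma mem_sing_mul_sing {α : Type*} [Monoid α] {a c g : α} {s : Set α} :
    g ∈ ({a} : Set α) * s * {c} ↔ ∃ p ∈ s, g = a * p * c := by
  rw [mem_mul_sing]
  constructor
  · rintro ⟨u, hu, rfl⟩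
    obtain ⟨p, hp, rfl⟩ := mem_sing_mul.1 hu
    exact ⟨p, hp, rfl⟩
  · rintro ⟨p, hp, rfl⟩
    exact ⟨a * p, mem_sing_mul.2 ⟨p, hp, rfl⟩, rfl⟩

lemma mem_mul_sing_mul {α : Type*} [Monoid α] {m g : α} {s t : Set α} :
    g ∈ s * ({m} : Set α) * t ↔ ∃ β ∈ s, ∃ γ ∈ t, g = β * m * γ := by
  rw [Set.mem_mul]
  constructor
  · rintro ⟨u, hu, γ, hγ, rfl⟩
    obtain ⟨β, hβ, rfl⟩ := mem_mul_sing.1 hu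
    exact ⟨β, hβ, γ, hγ, rfl⟩
  · rintro ⟨β, hβ, γ, hγ, rfl⟩
    exact ⟨β * m, mem_mul_sing.2 ⟨β, hβ, rfl⟩, γ, hγ, rfl⟩

end WH

/-- if `(G, B, N, W)` is a Tits system (with lifted simple reflections `S ⊆ N`),
then `(⟨B^d, N ≀ Σ_d⟩, B^d, N ≀ Σ_d, W ≀ Σ_d)` is a generalized Tits system in the sense of
Iwahori: `W ≀ Σ_d ≅ W^d ⋊ Σ_d` where `W^d` is generated by involutions, every `τ ∈ Σ_d`
normalizes `B^d` and permutes the simple reflections of `W^d`, `B^d τ ≠ B^d` for `τ ≠ 1`,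
and `s B^d w ⊆ B^d s w B^d ∪ B^d w B^d`, `s B^d ≠ B^d s` for every simple reflection `s` of
`W^d` and every `w ∈ W ≀ Σ_d`. -/
theorem wreath_generalized_tits_system {G : Type*} [Group G] (B N : Subgroup G) (S : Set G)
    (d : ℕ)
    -- `(G, B, N, W)` is a Tits system:
    (hgen : Subgroup.closure ((B : Set G) ∪ (N : Set G)) = ⊤)
    (hSN : S ⊆ (N : Set G))
    (hHnorm : ∀ n ∈ N, ∀ h ∈ B ⊓ N, n * h * n⁻¹ ∈ B ⊓ N)
    (hinv : ∀ s ∈ S, s * s ∈ B ⊓ N)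
    (hSgen : (N : Set G) ⊆ ↑(Subgroup.closure (S ∪ ↑(B ⊓ N))))
    (hTits : ∀ s ∈ S, ∀ w ∈ N,
      {s} * (B : Set G) * {w} ⊆ ↑B * {s * w} * ↑B ∪ ↑B * {w} * ↑B)
    (hsB : ∀ s ∈ S, {s} * (B : Set G) ≠ ↑B * {s}) :
    -- conclusion: the wreath quadruple is a generalized Tits system
    (Subgroup.closure ((wreathB B d : Set (WreathProduct G d)) ∪ ↑(wreathN N d)) = ⊤) ∧
    (∀ n ∈ wreathN N d, ∀ h ∈ wreathB B d ⊓ wreathN N d,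
      n * h * n⁻¹ ∈ wreathB B d ⊓ wreathN N d) ∧
    -- `W^d` is generated by the involutive simple reflections `s^{(j)}`:
    (∀ x ∈ wreathS d S, x * x ∈ wreathB B d ⊓ wreathN N d) ∧
    (SemidirectProduct.inl '' {f : Fin d → G | ∀ i, f i ∈ N} ⊆
      ((Subgroup.closure (wreathS d S ∪ ↑(wreathB B d ⊓ wreathN N d)) :
        Subgroup (WreathProduct G d)) : Set (WreathProduct G d))) ∧
    -- every `τ ∈ Ω = Σ_d` normalizes `B^d` and permutes the simple reflections:
    (∀ τ : Equiv.Perm (Fin d), ∀ b ∈ wreathB B d,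
      (SemidirectProduct.inr τ : WreathProduct G d) * b * (SemidirectProduct.inr τ)⁻¹ ∈
        wreathB B d) ∧
    (∀ τ : Equiv.Perm (Fin d), ∀ x ∈ wreathS d S,
      (SemidirectProduct.inr τ : WreathProduct G d) * x * (SemidirectProduct.inr τ)⁻¹ ∈
        wreathS d S) ∧
    -- `B^d τ ≠ B^d` for `τ ≠ 1`:
    (∀ τ : Equiv.Perm (Fin d), τ ≠ 1 →
      (wreathB B d : Set (WreathProduct G d)) * {SemidirectProduct.inr τ} ≠
        (wreathB B d : Set (WreathProduct G d))) ∧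
    -- the Tits condition for the simple reflections of `W^d`:
    (∀ x ∈ wreathS d S, ∀ w ∈ wreathN N d,
      {x} * (wreathB B d : Set (WreathProduct G d)) * {w} ⊆
        ↑(wreathB B d) * {x * w} * ↑(wreathB B d) ∪ ↑(wreathB B d) * {w} * ↑(wreathB B d)) ∧
    (∀ x ∈ wreathS d S,
      {x} * (wreathB B d : Set (WreathProduct G d)) ≠ ↑(wreathB B d) * {x}) := by
  classical
  open SemidirectProduct WH in
  refine ⟨?_, ?_, ?_, ?_, ?_, ?_, ?_, ?_, ?_⟩
  -- c1
  · rw [eq_top_iff]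
    intro x _
    set H := Subgroup.closure ((wreathB B d : Set (WreathProduct G d)) ∪ ↑(wreathN N d)) with hH
    have hBle : wreathB B d ≤ H := fun y hy => Subgroup.subset_closure (Or.inl hy)
    have hNle : wreathN N d ≤ H := fun y hy => Subgroup.subset_closure (Or.inr hy)
    have hunit : ∀ (j : Fin d) (a : G), unitHom j a ∈ H := by
      intro j a
      have ha : a ∈ Subgroup.closure ((B : Set G) ∪ (N : Set G)) := by
        rw [hgen]; trivial
      have hle : Subgroup.closure ((B : Set G) ∪ (N : Set G)) ≤ H.comap (unitHom j) := by
        rw [Subgroup.closure_le]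
        rintro g (hg | hg)
        · refine hBle (mem_wreathB.2 ⟨rfl, fun i => ?_⟩)
          show (if i = j then g else 1) ∈ B
          split
          · exact hg
          · exact B.one_mem
        · refine hNle (mem_wreathN.2 fun i => ?_)
          show (if i = j then g else 1) ∈ N
          split
          · exact hg
          · exact N.one_mem
      exact hle ha
    rw [← inl_left_mul_inr_right x]
    refine H.mul_mem ?_ (hNle (mem_wreathN.2 fun i => N.one_mem))
    rw [inl_eq_prod]
    refine Subgroup.list_prod_mem H ?_
    intro y hy
    obtain ⟨j, _, rfl⟩ := List.mem_map.1 hy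
    exact hunit j _
  -- c2
  · intro n hn h hh
    rw [mem_wreathN] at hn
    rw [Subgroup.mem_inf, mem_wreathB, mem_wreathN] at hh
    obtain ⟨⟨hr, hb⟩, hhN⟩ := hh
    rw [Subgroup.mem_inf]
    constructor
    · rw [mem_wreathB]
      refine ⟨conj_right n h hr, fun i => ?_⟩
      rw [conj_left n h hr i]
      exact (hHnorm _ (hn i) _ ⟨hb _, hhN _⟩).1
    · rw [mem_wreathN]
      intro i
      rw [conj_left n h hr i]
      exact (hHnorm _ (hn i) _ ⟨hb _, hhN _⟩).2
  -- c3
  · rintro x ⟨j, s, hs, rfl⟩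
    rw [← map_mul, ← unitTuple_mul]
    exact unit_mem_inf (hinv s hs)
  -- c4
  · rintro _ ⟨f, hf, rfl⟩
    set H := Subgroup.closure (wreathS d S ∪ ↑(wreathB B d ⊓ wreathN N d)) with hH
    have hunit : ∀ (j : Fin d) (a : G), a ∈ N → unitHom j a ∈ H := by
      intro j a ha
      have hle : Subgroup.closure (S ∪ ↑(B ⊓ N)) ≤ H.comap (unitHom j) := by
        rw [Subgroup.closure_le]
        rintro g (hg | hg)
        · exact Subgroup.subset_closure (Or.inl ⟨j, g, hg, rfl⟩)
        · exact Subgroup.subset_closure (Or.inr (unit_mem_inf hg))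
      exact hle (hSgen ha)
    rw [inl_eq_prod]
    refine Subgroup.list_prod_mem H ?_
    intro y hy
    obtain ⟨j, _, rfl⟩ := List.mem_map.1 hy
    exact hunit j _ (hf j)
  -- c5
  · intro τ b hb
    rw [mem_wreathB] at hb ⊢
    obtain ⟨hr, hbl⟩ := hb
    refine ⟨conj_right _ _ hr, fun i => ?_⟩
    rw [conj_left _ _ hr i]
    simpa using hbl _
  -- c6
  · rintro τ x ⟨j, s, hs, rfl⟩
    refine ⟨τ j, s, hs, ?_⟩
    rw [← map_inv, ← inl_aut]
    congr 1
    funext i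
    rw [permAction_apply]
    simp only [unitTuple]
    by_cases h : i = τ j
    · simp [h]
    · have : ¬ τ⁻¹ i = j := fun hc => h (by rw [← hc]; simp)
      rw [if_neg this, if_neg h]
  -- c7
  · intro τ hτ heq
    have : (inr τ : WreathProduct G d) ∈
        (wreathB B d : Set (WreathProduct G d)) * {inr τ} := by
      have h1 : (1 : WreathProduct G d) ∈ (wreathB B d : Set (WreathProduct G d)) :=
        (wreathB B d).one_mem
      have h2 : (inr τ : WreathProduct G d) ∈ ({inr τ} : Set (WreathProduct G d)) := rfl
      simpa using Set.mul_mem_mul h1 h2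
    rw [heq] at this
    rw [SetLike.mem_coe, mem_wreathB] at this
    exact hτ (by simpa using this.1)
  -- c8
  · rintro x ⟨j, s, hs, rfl⟩ w hw g hg
    have hwN := mem_wreathN.1 hw
    rw [mem_sing_mul_sing] at hg
    obtain ⟨p, hp, rfl⟩ := hg
    rw [SetLike.mem_coe, mem_wreathB] at hp
    obtain ⟨hp1, hp2⟩ := hp
    have hmem : s * p.left j * w.left j ∈ ({s} : Set G) * ↑B * {w.left j} :=
      mem_sing_mul_sing.2 ⟨p.left j, hp2 j, rfl⟩
    rcases hTits s hs (w.left j) (hwN j) hmem with hk | hk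
    · left
      rw [mem_mul_sing_mul] at hk
      obtain ⟨β, hβ, γ, hγ, heq⟩ := hk
      have hPm : (inl (fun i => if i = j then β else p.left i) : WreathProduct G d) ∈
          (wreathB B d : Set (WreathProduct G d)) := by
        rw [SetLike.mem_coe, mem_wreathB]
        refine ⟨rfl, fun i => ?_⟩
        show (if i = j then β else p.left i) ∈ B
        split
        · exact hβ
        · exact hp2 i
      have hQm : (inl (fun i => if w.right i = j then γ else 1) : WreathProduct G d) ∈
          (wreathB B d : Set (WreathProduct G d)) := by
        rw [SetLike.mem_coe, mem_wreathB]
        refine ⟨rfl, fun i => ?_⟩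
        show (if w.right i = j then γ else 1) ∈ B
        split
        · exact hγ
        · exact B.one_mem
      refine mem_mul_sing_mul.2 ⟨_, hPm, _, hQm, ?_⟩
      refine SemidirectProduct.ext ?_ ?_
      · funext i
        simp only [mul_left, mul_right, left_inl, right_inl, hp1, map_one, one_mul,
          mul_one, MulAut.one_apply, Pi.mul_apply, permAction_apply, inv_one,
          Equiv.Perm.coe_one, id_eq, Equiv.Perm.inv_def, Equiv.apply_symm_apply]
        by_cases hi : i = j
        · subst hi
          simp only [unitTuple, if_pos rfl, if_true]
          rw [heq]
        · simp only [unitTuple, if_neg hi]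
          group
      · simp [hp1]
    · right
      rw [mem_mul_sing_mul] at hk
      obtain ⟨β, hβ, γ, hγ, heq⟩ := hk
      have hPm : (inl (fun i => if i = j then β else p.left i) : WreathProduct G d) ∈
          (wreathB B d : Set (WreathProduct G d)) := by
        rw [SetLike.mem_coe, mem_wreathB]
        refine ⟨rfl, fun i => ?_⟩
        show (if i = j then β else p.left i) ∈ B
        split
        · exact hβ
        · exact hp2 i
      have hQm : (inl (fun i => if w.right i = j then γ else 1) : WreathProduct G d) ∈
          (wreathB B d : Set (WreathProduct G d)) := by
        rw [SetLike.mem_coe, mem_wreathB]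
        refine ⟨rfl, fun i => ?_⟩
        show (if w.right i = j then γ else 1) ∈ B
        split
        · exact hγ
        · exact B.one_mem
      refine mem_mul_sing_mul.2 ⟨_, hPm, _, hQm, ?_⟩
      refine SemidirectProduct.ext ?_ ?_
      · funext i
        simp only [mul_left, mul_right, left_inl, right_inl, hp1, map_one, one_mul,
          mul_one, MulAut.one_apply, Pi.mul_apply, permAction_apply, inv_one,
          Equiv.Perm.coe_one, id_eq, Equiv.Perm.inv_def, Equiv.apply_symm_apply]
        by_cases hi : i = j
        · subst hi
          simp only [unitTuple, if_pos rfl, if_true]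
          rw [heq]
        · simp only [unitTuple, if_neg hi]
          group
      · simp [hp1]
  -- c9
  · rintro x ⟨j, s, hs, rfl⟩ heq
    refine hsB s hs ?_
    ext g
    have hbmem : ∀ b ∈ B, (inl (unitTuple j b) : WreathProduct G d) ∈
        (wreathB B d : Set (WreathProduct G d)) := by
      intro b hb
      rw [SetLike.mem_coe, mem_wreathB]
      refine ⟨rfl, fun i => ?_⟩
      show (if i = j then b else 1) ∈ B
      split
      · exact hb
      · exact B.one_mem
    constructor
    · intro hg
      rw [mem_sing_mul] at hg
      obtain ⟨b, hb, rfl⟩ := hg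
      have hmem : (inl (unitTuple j s) : WreathProduct G d) * inl (unitTuple j b) ∈
          ({inl (unitTuple j s)} : Set (WreathProduct G d)) * ↑(wreathB B d) :=
        mem_sing_mul.2 ⟨_, hbmem b hb, rfl⟩
      rw [heq, mem_mul_sing] at hmem
      obtain ⟨q, hq, he⟩ := hmem
      rw [SetLike.mem_coe, mem_wreathB] at hq
      have h2 := congrArg (fun z : WreathProduct G d => z.left j) he
      simp only [mul_left, left_inl, right_inl, hq.1, map_one, MulAut.one_apply,
        Pi.mul_apply, unitTuple, if_pos rfl, if_true] at h2
      rw [mem_mul_sing]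
      exact ⟨q.left j, hq.2 j, h2⟩
    · intro hg
      rw [mem_mul_sing] at hg
      obtain ⟨b, hb, rfl⟩ := hg
      have hmem : (inl (unitTuple j b) : WreathProduct G d) * inl (unitTuple j s) ∈
          ↑(wreathB B d) * ({inl (unitTuple j s)} : Set (WreathProduct G d)) :=
        mem_mul_sing.2 ⟨_, hbmem b hb, rfl⟩
      rw [← heq, mem_sing_mul] at hmem
      obtain ⟨q, hq, he⟩ := hmem
      rw [SetLike.mem_coe, mem_wreathB] at hq
      have h2 := congrArg (fun z : WreathProduct G d => z.left j) he
      simp only [mul_left, left_inl, right_inl, hq.1, map_one, MulAut.one_apply,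
        Pi.mul_apply, unitTuple, if_pos rfl, if_true] at h2
      rw [mem_sing_mul]
      exact ⟨q.left j, hq.2 j, h2⟩
end

section
/- Let x = (x_1,...,x_d) ∈ N_m^d with Jordan types λ_1,...,λ_d ⊢ m, and for each partition ν ⊢ m let γ(x)(ν) = #{i : λ_i = ν}. Then the component group C(x) = C_{G_{m≀d}}(x)/C_{G_{m≀d}}(x)^0 of the centralizer of x in G_{m≀d} is isomorphic to the Young subgroup Σ_{γ(x)} = ∏_{ν ⊢ m} Σ_{γ(x)(ν)} of Σ_d. -/
open Polynomial


/-- The abstract group `G_{m≀d} = GL_m(ℂ) ≀ Σ_d`. -/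
abbrev WreathGL (m d : ℕ) := WreathProduct (GL (Fin m) ℂ) d

/-- `Σ_d` is discrete. -/
instance (d : ℕ) : TopologicalSpace (Equiv.Perm (Fin d)) := ⊥

/-- `G_{m≀d} = GL_m(ℂ)^d × Σ_d` as a topological space. -/
noncomputable instance (m d : ℕ) : TopologicalSpace (WreathGL m d) :=
  TopologicalSpace.induced (fun x => (x.left, x.right)) inferInstance

/-- The conjugation action of `G_{m≀d}` on `gl_m(ℂ)^d`
(with place permutation): `(g_i)_i w · (x_i)_i = (g_i x_{w⁻¹(i)} g_i⁻¹)_i`. -/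
noncomputable def wreathConjAct {m d : ℕ} (γ : WreathGL m d)
    (n : Fin d → Matrix (Fin m) (Fin m) ℂ) : Fin d → Matrix (Fin m) (Fin m) ℂ :=
  fun i => (γ.left i : Matrix (Fin m) (Fin m) ℂ) * n (γ.right⁻¹ i) *
    ((γ.left i)⁻¹ : GL (Fin m) ℂ)

/-- The centralizer `C_{G_{m≀d}}(x)` of `x ∈ N_m^d` (its underlying set is a subgroup, hence
equals its closure). -/
noncomputable def wreathCentralizer (m d : ℕ) (x : Fin d → Matrix (Fin m) (Fin m) ℂ) :
    Subgroup (WreathGL m d) :=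
  Subgroup.closure {γ | wreathConjAct γ x = x}

/-- The Young subgroup `Σ_γ ⊆ Σ_d` attached to a coloring `c : {1,...,d} → X`:
permutations preserving the coloring. -/
def youngSubgroup {d : ℕ} {X : Type*} (c : Fin d → X) : Subgroup (Equiv.Perm (Fin d)) where
  carrier := {σ | ∀ i, c (σ i) = c i}
  one_mem' := fun _ => rfl
  mul_mem' := by
    intro a b ha hb i
    simpa [Equiv.Perm.mul_apply] using (ha (b i)).trans (hb i)
  inv_mem' := by
    intro a ha i
    have := ha (a⁻¹ i)
    simpa using this.symm



variable {m d : ℕ}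

lemma conj_iff (g : GL (Fin m) ℂ) (A B : Matrix (Fin m) (Fin m) ℂ) :
    (g : Matrix (Fin m) (Fin m) ℂ) * A * ((g⁻¹ : GL (Fin m) ℂ) : Matrix (Fin m) (Fin m) ℂ) = B ↔
      (g : Matrix (Fin m) (Fin m) ℂ) * A = B * (g : Matrix (Fin m) (Fin m) ℂ) := by
  constructor
  · intro h
    have := congrArg (fun M => M * (g : Matrix (Fin m) (Fin m) ℂ)) h
    simpa only [mul_assoc, Units.inv_mul, mul_one] using this
  · intro h
    have := congrArg (fun M => M * ((g⁻¹ : GL (Fin m) ℂ) : Matrix (Fin m) (Fin m) ℂ)) h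
    simpa only [mul_assoc, Units.mul_inv, mul_one] using this

lemma commGL_pathConnected (y : Matrix (Fin m) (Fin m) ℂ) :
    IsPathConnected {g : GL (Fin m) ℂ |
      (g : Matrix (Fin m) (Fin m) ℂ) * y = y * (g : Matrix (Fin m) (Fin m) ℂ)} := by
  refine ⟨1, by simp, ?_⟩
  intro g hg
  simp only [Set.mem_setOf_eq] at hg
  set A : Matrix (Fin m) (Fin m) ℂ := (g : Matrix (Fin m) (Fin m) ℂ) with hA
  set q : ℂ[X] :=
    ((X : ℂ[X]) • A.map C + (1 - (X : ℂ[X])) • 1).det with hqdef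
  have hqe : ∀ t : ℂ, q.eval t = (t • A + (1 - t) • (1 : Matrix (Fin m) (Fin m) ℂ)).det := by
    intro t
    have h1 : (evalRingHom t).mapMatrix ((X : ℂ[X]) • A.map C + (1 - (X : ℂ[X])) • 1)
        = t • A + (1 - t) • (1 : Matrix (Fin m) (Fin m) ℂ) := by
      ext i j
      by_cases h : i = j <;>
        simp [Matrix.map_apply, Matrix.add_apply, Matrix.smul_apply, Matrix.one_apply, h,
          smul_eq_mul, mul_comm (A _ _) t]
    calc q.eval t = (evalRingHom t) ((((X : ℂ[X]) • A.map C + (1 - (X : ℂ[X])) • 1)).det) := rfl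
      _ = ((evalRingHom t).mapMatrix ((X : ℂ[X]) • A.map C + (1 - (X : ℂ[X])) • 1)).det :=
          (evalRingHom t).map_det _
      _ = _ := by rw [h1]
  have hdetA : A.det ≠ 0 :=
    ((Matrix.isUnit_iff_isUnit_det A).mp g.isUnit).ne_zero
  have hq1 : q.eval 1 = A.det := by rw [hqe]; simp
  have hq0 : q.eval 0 = 1 := by rw [hqe]; simp
  have hqne : q ≠ 0 := by
    intro h
    rw [h, eval_zero] at hq1
    exact hdetA hq1.symm
  have hfin : {t : ℂ | q.IsRoot t}.Finite := q.finite_setOf_isRoot hqne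
  have hpc : IsPathConnected {t : ℂ | q.IsRoot t}ᶜ :=
    hfin.countable.isPathConnected_compl_of_one_lt_rank
      (by rw [Complex.rank_real_complex]; norm_num)
  have h0 : (0 : ℂ) ∈ {t : ℂ | q.IsRoot t}ᶜ := by
    simp [Polynomial.IsRoot, hq0]
  have h1' : (1 : ℂ) ∈ {t : ℂ | q.IsRoot t}ᶜ := by
    simp [Polynomial.IsRoot, hq1, hdetA]
  obtain ⟨γp, hγp⟩ := hpc.joinedIn 0 h0 1 h1'
  set Mf : unitInterval → Matrix (Fin m) (Fin m) ℂ :=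
    fun s => γp s • A + (1 - γp s) • 1 with hMf
  have hMdet : ∀ s, (Mf s).det ≠ 0 := by
    intro s
    have := hγp s
    rw [Set.mem_compl_iff] at this
    simpa [Polynomial.IsRoot, hqe] using this
  have hMunit : ∀ s, IsUnit (Mf s) := fun s =>
    (Matrix.isUnit_iff_isUnit_det _).mpr (Ne.isUnit (hMdet s))
  have hMcont : Continuous Mf :=
    (γp.continuous.smul continuous_const).add
      ((continuous_const.sub γp.continuous).smul continuous_const)
  have hMinvcont : Continuous fun s => (Mf s)⁻¹ := by
    have heq : (fun s => (Mf s)⁻¹) = fun s => ((Mf s).det)⁻¹ • (Mf s).adjugate := by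
      funext s
      rw [Matrix.inv_def, Ring.inverse_eq_inv']
    rw [heq]
    exact (hMcont.matrix_det.inv₀ hMdet).smul hMcont.matrix_adjugate
  refine ⟨{ toFun := fun s => (hMunit s).unit
            continuous_toFun := ?_
            source' := ?_
            target' := ?_ }, fun s => ?_⟩
  · apply Units.continuous_iff.mpr
    constructor
    · have : (fun s => (((hMunit s).unit : Matrix (Fin m) (Fin m) ℂ))) = Mf := by
        funext s; exact (hMunit s).unit_spec
      exact (congrArg Continuous this).mpr hMcont
    · have : (fun s => ((((hMunit s).unit)⁻¹ : (Matrix (Fin m) (Fin m) ℂ)ˣ) :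
          Matrix (Fin m) (Fin m) ℂ)) = fun s => (Mf s)⁻¹ := by
        funext s
        rw [Matrix.coe_units_inv, (hMunit s).unit_spec]
      simpa [this] using hMinvcont
  · apply Units.ext
    show (Mf 0 : Matrix (Fin m) (Fin m) ℂ) = 1
    simp [hMf, γp.source]
  · apply Units.ext
    show (Mf 1 : Matrix (Fin m) (Fin m) ℂ) = A
    simp [hMf, γp.target]
  · show ((hMunit s).unit : Matrix (Fin m) (Fin m) ℂ) * y =
      y * ((hMunit s).unit : Matrix (Fin m) (Fin m) ℂ)
    rw [(hMunit s).unit_spec]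
    simp only [hMf, add_mul, mul_add, smul_mul_assoc, mul_smul_comm, one_mul, mul_one, hg]


lemma wreathConjAct_one {m d : ℕ} (n : Fin d → Matrix (Fin m) (Fin m) ℂ) :
    wreathConjAct (1 : WreathGL m d) n = n := by
  funext i
  simp [wreathConjAct]

lemma wreathConjAct_mul {m d : ℕ} (γ δ : WreathGL m d)
    (n : Fin d → Matrix (Fin m) (Fin m) ℂ) :
    wreathConjAct (γ * δ) n = wreathConjAct γ (wreathConjAct δ n) := by
  funext i
  show ((γ.left * (permAction (GL (Fin m) ℂ) d γ.right) δ.left) i : Matrix (Fin m) (Fin m) ℂ) *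
      n ((γ.right * δ.right)⁻¹ i) *
      ((((γ.left * (permAction (GL (Fin m) ℂ) d γ.right) δ.left) i)⁻¹ : GL (Fin m) ℂ) :
        Matrix (Fin m) (Fin m) ℂ) = _
  show ((γ.left i * δ.left (γ.right⁻¹ i) : GL (Fin m) ℂ) : Matrix (Fin m) (Fin m) ℂ) *
      n ((γ.right * δ.right)⁻¹ i) *
      (((γ.left i * δ.left (γ.right⁻¹ i) : GL (Fin m) ℂ)⁻¹ : GL (Fin m) ℂ) :
        Matrix (Fin m) (Fin m) ℂ) = _
  rw [mul_inv_rev]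
  show _ = (γ.left i : Matrix (Fin m) (Fin m) ℂ) *
      ((δ.left (γ.right⁻¹ i) : Matrix (Fin m) (Fin m) ℂ) * n (δ.right⁻¹ (γ.right⁻¹ i)) *
        ((δ.left (γ.right⁻¹ i))⁻¹ : GL (Fin m) ℂ)) * ((γ.left i)⁻¹ : GL (Fin m) ℂ)
  simp only [mul_inv_rev, Units.val_mul, Equiv.Perm.mul_apply]
  noncomm_ring

def centSG (m d : ℕ) (x : Fin d → Matrix (Fin m) (Fin m) ℂ) : Subgroup (WreathGL m d) where
  carrier := {γ | wreathConjAct γ x = x}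
  one_mem' := wreathConjAct_one x
  mul_mem' := fun {a b} ha hb => by
    show wreathConjAct (a * b) x = x
    rw [wreathConjAct_mul]
    rw [show wreathConjAct b x = x from hb, show wreathConjAct a x = x from ha]
  inv_mem' := fun {a} ha => by
    show wreathConjAct a⁻¹ x = x
    conv_lhs => rw [← show wreathConjAct a x = x from ha]
    rw [← wreathConjAct_mul, inv_mul_cancel, wreathConjAct_one]

lemma wreathCentralizer_eq (m d : ℕ) (x : Fin d → Matrix (Fin m) (Fin m) ℂ) :
    wreathCentralizer m d x = centSG m d x := by
  have h : {γ : WreathGL m d | wreathConjAct γ x = x} = ↑(centSG m d x) := rfl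
  rw [wreathCentralizer, h]
  exact Subgroup.closure_eq _

/-- for `x = (x_1,...,x_d) ∈ N_m^d` with Jordan types `λ_1,...,λ_d ⊢ m`
(encoded by a labelling `lam` such that `lam i = lam j` iff `x_i` and `x_j` are conjugate),
the component group `C(x) = C_{G_{m≀d}}(x) / C_{G_{m≀d}}(x)⁰` is isomorphic to the Young
subgroup `Σ_{γ(x)} = ∏_{ν ⊢ m} Σ_{γ(x)(ν)}` of `Σ_d`. -/
theorem component_group_iso_young (m d : ℕ)
    (x : Fin d → Matrix (Fin m) (Fin m) ℂ) (hx : ∀ i, IsNilpotent (x i))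
    (lam : Fin d → Nat.Partition m)
    (hlam : ∀ i j : Fin d, lam i = lam j ↔
      ∃ g : GL (Fin m) ℂ,
        (g : Matrix (Fin m) (Fin m) ℂ) * x j * ((g⁻¹ : GL (Fin m) ℂ) :
          Matrix (Fin m) (Fin m) ℂ) = x i) :
    ∃ H : Subgroup ↥(wreathCentralizer m d x),
      (H : Set ↥(wreathCentralizer m d x)) =
        connectedComponent (1 : ↥(wreathCentralizer m d x)) ∧
      ∃ hn : H.Normal,
        Nonempty
          (letI := hn
           (↥(wreathCentralizer m d x) ⧸ H) ≃* ↥(youngSubgroup lam)) := by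
  classical
  rw [wreathCentralizer_eq]
  set C := centSG m d x with hCdef
  have hy : ∀ γ : WreathGL m d, γ ∈ C → γ.right ∈ youngSubgroup lam := by
    intro γ hγ
    have hγ' : wreathConjAct γ x = x := hγ
    show ∀ i, lam (γ.right i) = lam i
    intro i
    have h := congrFun hγ' (γ.right i)
    simp only [wreathConjAct] at h
    rw [show γ.right⁻¹ (γ.right i) = i from γ.right.symm_apply_apply i] at h
    exact (hlam (γ.right i) i).mpr ⟨γ.left (γ.right i), h⟩
  let ψ : ↥C →* ↥(youngSubgroup lam) :=
    MonoidHom.codRestrict (SemidirectProduct.rightHom.comp C.subtype) (youngSubgroup lam)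
      (fun γ => hy γ.1 γ.2)
  have hsurj : Function.Surjective ψ := by
    rintro ⟨w, hw⟩
    have hw' : ∀ i, lam (w i) = lam i := hw
    have hchoice : ∀ i, ∃ g : GL (Fin m) ℂ,
        (g : Matrix (Fin m) (Fin m) ℂ) * x (w⁻¹ i) *
          ((g⁻¹ : GL (Fin m) ℂ) : Matrix (Fin m) (Fin m) ℂ) = x i := by
      intro i
      apply (hlam i (w⁻¹ i)).mp
      have h := hw' (w⁻¹ i)
      rw [show w (w⁻¹ i) = i from w.apply_symm_apply i] at h
      exact h
    choose gfun hg using hchoice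
    refine ⟨⟨⟨gfun, w⟩, ?_⟩, ?_⟩
    · show wreathConjAct ⟨gfun, w⟩ x = x
      funext i
      exact hg i
    · apply Subtype.ext
      rfl
  have hker : ∀ γ : ↥C, γ ∈ ψ.ker ↔ (γ : WreathGL m d).right = 1 := by
    intro γ
    rw [MonoidHom.mem_ker]
    constructor
    · intro h
      exact congrArg Subtype.val h
    · intro h
      exact Subtype.ext h
  haveI : DiscreteTopology (Equiv.Perm (Fin d)) := ⟨rfl⟩
  have hcont : Continuous (fun γ : ↥C => (γ : WreathGL m d).right) := by
    have h1 : Continuous (fun γ : WreathGL m d => (γ.left, γ.right)) := continuous_induced_dom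
    exact (continuous_snd.comp h1).comp continuous_subtype_val
  have hclopen : IsClopen ((ψ.ker : Set ↥C)) := by
    have hset : (ψ.ker : Set ↥C) =
        (fun γ : ↥C => (γ : WreathGL m d).right) ⁻¹' {1} := by
      ext γ
      simpa using hker γ
    rw [hset]
    exact (isClopen_discrete _).preimage hcont
  set Q : Set (Fin d → GL (Fin m) ℂ) :=
    Set.univ.pi (fun i => {g : GL (Fin m) ℂ |
      (g : Matrix (Fin m) (Fin m) ℂ) * x i = x i * (g : Matrix (Fin m) (Fin m) ℂ)}) with hQdef
  have hQpre : IsPreconnected Q :=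
    isPreconnected_univ_pi fun i => (commGL_pathConnected (x i)).isConnected.isPreconnected
  have hQmemC : ∀ g : Fin d → GL (Fin m) ℂ, g ∈ Q → SemidirectProduct.inl g ∈ C := by
    intro g hgQ
    show wreathConjAct (SemidirectProduct.inl g) x = x
    funext i
    simp only [wreathConjAct, SemidirectProduct.left_inl, SemidirectProduct.right_inl, inv_one,
      Equiv.Perm.one_apply]
    exact (conj_iff _ _ _).mpr (hgQ i (Set.mem_univ i))
  let F : ↥Q → ↥C := fun g => ⟨SemidirectProduct.inl g.1, hQmemC g.1 g.2⟩
  have hFcont : Continuous F := by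
    apply Continuous.subtype_mk
    apply continuous_induced_rng.mpr
    exact continuous_subtype_val.prodMk continuous_const
  have hrange : Set.range F = (ψ.ker : Set ↥C) := by
    ext γ
    constructor
    · rintro ⟨g, rfl⟩
      rw [SetLike.mem_coe, hker]
      exact SemidirectProduct.right_inl g.1
    · intro hγ
      rw [SetLike.mem_coe, hker] at hγ
      have hmemQ : (γ : WreathGL m d).left ∈ Q := by
        intro i _
        have hγ' : wreathConjAct ↑γ x = x := γ.2
        have h := congrFun hγ' i
        simp only [wreathConjAct, hγ, inv_one, Equiv.Perm.one_apply] at h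
        exact (conj_iff _ _ _).mp h
      refine ⟨⟨(γ : WreathGL m d).left, hmemQ⟩, ?_⟩
      apply Subtype.ext
      show SemidirectProduct.inl (γ : WreathGL m d).left = (γ : WreathGL m d)
      refine SemidirectProduct.ext ?_ ?_
      · rfl
      · exact (SemidirectProduct.right_inl _).trans hγ.symm
  haveI : PreconnectedSpace ↥Q := Subtype.preconnectedSpace hQpre
  have hpre : IsPreconnected (ψ.ker : Set ↥C) := hrange ▸ isPreconnected_range hFcont
  have hone : (1 : ↥C) ∈ ψ.ker := (hker 1).mpr rfl
  refine ⟨ψ.ker, ?_, ?_⟩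
  · apply Set.Subset.antisymm
    · exact hpre.subset_connectedComponent hone
    · exact hclopen.connectedComponent_subset hone
  · exact ⟨inferInstance, ⟨QuotientGroup.quotientKerEquivOfSurjective ψ hsurj⟩⟩
end
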